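/- For every n ≥ 0, the number of restricted ascent sequences of length n equals the n-th Catalan number C_n = (1/(n+1))·binom(2n, n). -/

import Mathlib

/-!
STATEMENT 16: For every n ≥ 0, the number of restricted ascent sequences of length n
equals the n-th Catalan number C_n = (1/(n+1))·binom(2n,n).
-/

/-- Number of ascents of a finite sequence of naturals. -/
def ascents (l : List ℕ) : ℕ := (l.zip l.tail).countP fun p => decide (p.1 < p.2)

/-- `l` is a restricted ascent sequence: `x₁ = 0` and, for `i ≥ 2`,
`max(m-1,0) ≤ xᵢ ≤ 1 + asc(x₁,…,x_{i-1})` where `m = max(x₁,…,x_{i-1})`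
(here `m - 1` is truncated subtraction, i.e. `max(m-1,0)`).
The empty sequence is a restricted ascent sequence. -/
def IsRestrictedAscentSeq (l : List ℕ) : Prop :=
  ∀ i (h : i < l.length),
    if i = 0 then l.get ⟨i, h⟩ = 0
    else (l.take i).foldr max 0 - 1 ≤ l.get ⟨i, h⟩ ∧ l.get ⟨i, h⟩ ≤ ascents (l.take i) + 1


/-- `W n k = [x^n] C(x)^k` where `C` is the Catalan GF, defined recursively. -/
def W : ℕ → ℕ → ℕ
  | 0, _ => 1
  | _+1, 0 => 0
  | n+1, k+1 => W (n+1) k + W n (k+2)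
  termination_by n k => (n, k)

lemma W_zero_right (k : ℕ) : W 0 k = 1 := by cases k <;> simp [W]

lemma W_succ_zero (n : ℕ) : W (n+1) 0 = 0 := by rw [W]

lemma W_succ_succ (n k : ℕ) : W (n+1) (k+1) = W (n+1) k + W n (k+2) := by
  rw [W]

lemma W_succ_one (n : ℕ) : W (n+1) 1 = W n 2 := by
  rw [W_succ_succ, W_succ_zero, Nat.zero_add]

lemma W_one_arg (r : ℕ) : W 1 r = r := by
  induction r with
  | zero => rw [W_succ_zero]
  | succ r ih => rw [W_succ_succ, ih, W_zero_right]

/-- Convolution lemma : `C^(k+1) = C * C^k`. -/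
lemma W_conv : ∀ n k, W n (k+1) = ∑ i ∈ Finset.range (n+1), W i 1 * W (n-i) k := by
  intro n
  induction n with
  | zero => intro k; simp [W_zero_right]
  | succ n ihn =>
    intro k
    induction k with
    | zero =>
      rw [Finset.sum_range_succ]
      have h0 : ∀ i ∈ Finset.range (n+1), W i 1 * W (n+1-i) 0 = 0 := by
        intro i hi
        rw [Finset.mem_range] at hi
        obtain ⟨m, hm⟩ : ∃ m, n + 1 - i = m + 1 := ⟨n - i, by omega⟩
        rw [hm, W_succ_zero, Nat.mul_zero]
      rw [Finset.sum_eq_zero h0, Nat.sub_self, W_zero_right, Nat.mul_one]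
      exact (Nat.zero_add _).symm
    | succ k ihk =>
      have hsplit : ∀ i ∈ Finset.range (n+1),
          W i 1 * W (n+1-i) (k+1) = W i 1 * W (n+1-i) k + W i 1 * W (n-i) (k+2) := by
        intro i hi
        rw [Finset.mem_range] at hi
        have h1 : n + 1 - i = (n - i) + 1 := by omega
        rw [h1, W_succ_succ, Nat.mul_add]
      rw [W_succ_succ, ihk, ihn (k+2)]
      rw [Finset.sum_range_succ (f := fun i => W i 1 * W (n+1-i) (k+1)),
          Finset.sum_range_succ (f := fun i => W i 1 * W (n+1-i) k)]
      rw [Finset.sum_congr rfl hsplit, Finset.sum_add_distrib]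
      simp only [Nat.sub_self, W_zero_right]
      ring

lemma W_one_eq_catalan : ∀ n, W n 1 = catalan n := by
  intro n
  induction n using Nat.strong_induction_on with
  | _ n ih =>
    match n with
    | 0 => rw [show W 0 1 = 1 from W_zero_right 1, catalan_zero]
    | n+1 =>
      rw [W_succ_one, W_conv, catalan_succ,
        Fin.sum_univ_eq_sum_range (fun i => catalan i * catalan (n - i)) (n+1)]
      exact Finset.sum_congr rfl fun i hi => by
        rw [Finset.mem_range] at hi
        rw [ih i (by omega), ih (n-i) (by omega)]

lemma W_two_eq_catalan (n : ℕ) : W n 2 = catalan (n+1) := by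
  rw [← W_succ_one, W_one_eq_catalan]

/-- `T r k d = [x^k] C^r * (1+xC³)^(d-1)`, recursively. -/
def T : ℕ → ℕ → ℕ → ℕ
  | _, 0, _ => 1
  | _, _+1, 0 => 0
  | r, k+1, 1 => W (k+1) r
  | r, k+1, d+2 => T r (k+1) (d+1) + T (r+3) k (d+1)
  termination_by _ k d => (k, d)

lemma T_zero_k (r d : ℕ) : T r 0 d = 1 := by rw [T]

lemma T_zero_d (r k : ℕ) : T r (k+1) 0 = 0 := by rw [T]

lemma T_one_d (r k : ℕ) : T r k 1 = W k r := by
  cases k with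
  | zero => rw [T_zero_k, W_zero_right]
  | succ k => rw [T]

lemma T_step (r k d : ℕ) : T r (k+1) (d+2) = T r (k+1) (d+1) + T (r+3) k (d+1) := by
  rw [T]

/-- Partial sums `S k d = ∑_{e=1}^d T 3 k e`. -/
def S (k : ℕ) : ℕ → ℕ
  | 0 => 0
  | d+1 => S k d + T 3 k (d+1)

lemma S_zero (k : ℕ) : S k 0 = 0 := rfl

lemma S_succ (k d : ℕ) : S k (d+1) = S k d + T 3 k (d+1) := rfl

-- identities about T
lemma LA : ∀ k r d, T (r+1) (k+1) (d+1) = T r (k+1) (d+1) + T (r+2) k (d+1) := by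
  intro k
  induction k with
  | zero =>
    intro r d
    induction d with
    | zero =>
      rw [T_one_d, T_one_d, T_one_d, W_succ_succ]
    | succ d ihd =>
      rw [T_step, T_step, ihd]
      simp [T_zero_k]
  | succ k' ihk =>
    intro r d
    induction d with
    | zero =>
      rw [T_one_d, T_one_d, T_one_d, W_succ_succ]
    | succ d ihd =>
      rw [T_step, T_step, ihd, T_step]
      have h := ihk (r+3) d
      have e1 : r + 1 + 3 = r + 3 + 1 := by omega
      have e2 : r + 2 + 3 = r + 3 + 2 := by omega
      rw [e1, e2, h]
      ring

lemma LW3 : ∀ k r d, T (r+3) (k+1) (d+1) = T r (k+1) (d+2) + T (r+2) k (d+2) + T (r+3) k (d+1) := by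
  intro k
  induction k with
  | zero =>
    intro r d
    induction d with
    | zero =>
      have h1 : T r 1 2 = T r 1 1 + T (r+3) 0 1 := T_step r 0 0
      simp only [T_one_d, T_zero_k, h1, W_one_arg] at *
      try simp only [Nat.add_assoc, Nat.reduceAdd, T_one_d, W_one_arg, W_zero_right, T_zero_k, S_succ, S_zero] at *
      try omega
    | succ d ihd =>
      have h1 : T (r+3) 1 (d+2) = T (r+3) 1 (d+1) + T (r+3+3) 0 (d+1) := T_step (r+3) 0 d
      have h2 : T r 1 (d+3) = T r 1 (d+2) + T (r+3) 0 (d+2) := T_step r 0 (d+1)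
      simp only [T_zero_k] at *
      try simp only [Nat.add_assoc, Nat.reduceAdd, T_one_d, W_one_arg, W_zero_right, T_zero_k, S_succ, S_zero] at *
      try omega
  | succ k' ihk =>
    intro r d
    induction d with
    | zero =>
      have e1 : T r (k'+2) 2 = T r (k'+2) 1 + T (r+3) (k'+1) 1 := T_step r (k'+1) 0
      have e2 : T (r+2) (k'+1) 2 = T (r+2) (k'+1) 1 + T (r+5) k' 1 := by
        have := T_step (r+2) k' 0
        simpa [show r+2+3 = r+5 by omega] using this
      have w1 : W (k'+2) (r+3) = W (k'+2) (r+2) + W (k'+1) (r+4) := W_succ_succ (k'+1) (r+2)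
      have w2 : W (k'+2) (r+2) = W (k'+2) (r+1) + W (k'+1) (r+3) := W_succ_succ (k'+1) (r+1)
      have w3 : W (k'+2) (r+1) = W (k'+2) r + W (k'+1) (r+2) := W_succ_succ (k'+1) r
      have w4 : W (k'+1) (r+4) = W (k'+1) (r+3) + W k' (r+5) := W_succ_succ k' (r+3)
      simp only [T_one_d] at *
      try simp only [Nat.add_assoc, Nat.reduceAdd, T_one_d, W_one_arg, W_zero_right, T_zero_k, S_succ, S_zero] at *
      try omega
    | succ d ihd =>
      have h0 : T (r+3) (k'+2) (d+2) = T (r+3) (k'+2) (d+1) + T (r+6) (k'+1) (d+1) := by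
        have := T_step (r+3) (k'+1) d
        simpa [show r+3+3 = r+6 by omega] using this
      have h1 : T r (k'+2) (d+3) = T r (k'+2) (d+2) + T (r+3) (k'+1) (d+2) := T_step r (k'+1) (d+1)
      have h2 : T (r+2) (k'+1) (d+3) = T (r+2) (k'+1) (d+2) + T (r+5) k' (d+2) := by
        have := T_step (r+2) k' (d+1)
        simpa [show r+2+3 = r+5 by omega] using this
      have h3 : T (r+3) (k'+1) (d+2) = T (r+3) (k'+1) (d+1) + T (r+6) k' (d+1) := by
        have := T_step (r+3) k' d
        simpa [show r+3+3 = r+6 by omega] using this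
      have h4 := ihk (r+3) d
      simp only [show r+3+3 = r+6 by omega, show r+3+2 = r+5 by omega] at h4
      try simp only [Nat.add_assoc, Nat.reduceAdd, T_one_d, W_one_arg, W_zero_right, T_zero_k, S_succ, S_zero] at *
      try omega

lemma R2 : ∀ k d, T 2 (k+1) (d+1) = T 2 k (d+1) + T 3 k (d+1) + S k d := by
  intro k d
  induction d with
  | zero =>
    have w1 : W (k+1) 2 = W (k+1) 1 + W k 3 := W_succ_succ k 1
    have w2 : W (k+1) 1 = W k 2 := W_succ_one k
    simp only [T_one_d, S_zero]
    try simp only [Nat.add_assoc, Nat.reduceAdd, T_one_d, W_one_arg, W_zero_right] at *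
    omega
  | succ d ihd =>
    have h0 : T 2 (k+1) (d+2) = T 2 (k+1) (d+1) + T 5 k (d+1) := T_step 2 k d
    cases k with
    | zero =>
      simp only [T_zero_k, S_succ] at *
      try simp only [Nat.add_assoc, Nat.reduceAdd, T_one_d, W_one_arg, W_zero_right, T_zero_k, S_succ, S_zero] at *
      try omega
    | succ k' =>
      have h1 : T 2 (k'+1) (d+2) = T 2 (k'+1) (d+1) + T 5 k' (d+1) := T_step 2 k' d
      have h2 : T 3 (k'+1) (d+2) = T 3 (k'+1) (d+1) + T 6 k' (d+1) := T_step 3 k' d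
      have h3 : T 5 (k'+1) (d+1) = T 4 (k'+1) (d+1) + T 6 k' (d+1) := LA k' 4 d
      have h4 : T 4 (k'+1) (d+1) = T 3 (k'+1) (d+1) + T 5 k' (d+1) := LA k' 3 d
      simp only [S_succ] at *
      try simp only [Nat.add_assoc, Nat.reduceAdd, T_one_d, W_one_arg, W_zero_right, T_zero_k, S_succ, S_zero] at *
      try omega

lemma R1 : ∀ k d, T 3 (k+1) (d+1) = T 2 k (d+2) + T 3 k (d+1) + S k (d+1) := by
  intro k d
  induction d with
  | zero =>
    cases k with
    | zero =>
      simp only [T_one_d, T_zero_k, S_succ, S_zero, W_one_arg, W_zero_right, Nat.add_assoc, Nat.reduceAdd]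
      try omega
    | succ k' =>
      have e1 : T 2 (k'+1) 2 = T 2 (k'+1) 1 + T 5 k' 1 := T_step 2 k' 0
      have w1 : W (k'+2) 3 = W (k'+2) 2 + W (k'+1) 4 := W_succ_succ (k'+1) 2
      have w2 : W (k'+2) 2 = W (k'+2) 1 + W (k'+1) 3 := W_succ_succ (k'+1) 1
      have w3 : W (k'+2) 1 = W (k'+1) 2 := W_succ_one (k'+1)
      have w4 : W (k'+1) 4 = W (k'+1) 3 + W k' 5 := W_succ_succ k' 3
      simp only [T_one_d, S_succ, S_zero] at *
      try simp only [Nat.add_assoc, Nat.reduceAdd, T_one_d, W_one_arg, W_zero_right, T_zero_k, S_succ, S_zero] at *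
      try omega
  | succ d ihd =>
    have h0 : T 3 (k+1) (d+2) = T 3 (k+1) (d+1) + T 6 k (d+1) := T_step 3 k d
    cases k with
    | zero =>
      simp only [T_zero_k, S_succ] at *
      try simp only [Nat.add_assoc, Nat.reduceAdd, T_one_d, W_one_arg, W_zero_right, T_zero_k, S_succ, S_zero] at *
      try omega
    | succ k' =>
      have h1 : T 2 (k'+1) (d+3) = T 2 (k'+1) (d+2) + T 5 k' (d+2) := T_step 2 k' (d+1)
      have h2 : T 3 (k'+1) (d+2) = T 3 (k'+1) (d+1) + T 6 k' (d+1) := T_step 3 k' d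
      have h3 := LW3 k' 3 d
      simp only [show (3:ℕ)+3 = 6 by omega, show (3:ℕ)+2 = 5 by omega] at h3
      simp only [S_succ] at *
      try simp only [Nat.add_assoc, Nat.reduceAdd, T_one_d, W_one_arg, W_zero_right, T_zero_k, S_succ, S_zero] at *
      try omega

def maxL (l : List ℕ) : ℕ := l.foldr max 0

def lastL (l : List ℕ) : ℕ := l.getLast?.getD 0

def exts (l : List ℕ) : List ℕ :=
  if l = [] then [0] else List.range' (maxL l - 1) (ascents l + 2 - (maxL l - 1))

def seqsFrom : ℕ → List ℕ → List (List ℕ)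
  | 0, l => [l]
  | k+1, l => (exts l).flatMap fun x => seqsFrom k (l ++ [x])

lemma maxL_cons (a : ℕ) (t : List ℕ) : maxL (a :: t) = max a (maxL t) := rfl

lemma maxL_append (l : List ℕ) (x : ℕ) : maxL (l ++ [x]) = max (maxL l) x := by
  induction l with
  | nil => simp [maxL]
  | cons a t ih =>
    rw [List.cons_append, maxL_cons, ih, maxL_cons, Nat.max_assoc]

lemma lastL_append (l : List ℕ) (x : ℕ) : lastL (l ++ [x]) = x := by
  simp [lastL, List.getLast?_concat]

lemma ascents_cons₂ (a b : ℕ) (t : List ℕ) :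
    ascents (a :: b :: t) = (if a < b then 1 else 0) + ascents (b :: t) := by
  show List.countP _ ((a, b) :: (b :: t).zip t) = _
  rw [List.countP_cons]
  by_cases h : a < b <;> simp [h, ascents, Nat.add_comm]

lemma ascents_nil : ascents [] = 0 := rfl

lemma ascents_single (a : ℕ) : ascents [a] = 0 := rfl

lemma ascents_append (l : List ℕ) (hl : l ≠ []) (x : ℕ) :
    ascents (l ++ [x]) = ascents l + (if lastL l < x then 1 else 0) := by
  induction l with
  | nil => exact absurd rfl hl
  | cons a t ih =>
    cases t with
    | nil =>
      show ascents [a, x] = _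
      rw [ascents_cons₂ a x [], ascents_single, ascents_single, lastL]
      simp [Nat.add_comm]
      by_cases h : a < x <;> simp [h]
    | cons b t' =>
      have h2 : (a :: b :: t') ++ [x] = a :: b :: (t' ++ [x]) := rfl
      have h4 : b :: (t' ++ [x]) = (b :: t') ++ [x] := rfl
      have h3 : lastL (a :: b :: t') = lastL (b :: t') := by
        simp [lastL, List.getLast?_cons_cons]
      rw [h2, ascents_cons₂ a b (t' ++ [x]), h4, ih (by simp),
        ascents_cons₂ a b t', h3]
      omega

lemma le_maxL : ∀ {l : List ℕ} {y : ℕ}, y ∈ l → y ≤ maxL l := by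
  intro l
  induction l with
  | nil => intro y hy; simp at hy
  | cons a t ih =>
    intro y hy
    rw [maxL_cons]
    rcases List.mem_cons.1 hy with h | h
    · exact h ▸ Nat.le_max_left _ _
    · exact Nat.le_trans (ih h) (Nat.le_max_right _ _)

lemma lastL_mem {l : List ℕ} (hl : l ≠ []) : lastL l ∈ l := by
  rw [lastL, List.getLast?_eq_getLast hl]
  exact List.getLast_mem hl

lemma lastL_le_maxL {l : List ℕ} (hl : l ≠ []) : lastL l ≤ maxL l :=
  le_maxL (lastL_mem hl)

lemma RAS_nil : IsRestrictedAscentSeq [] := fun _ h => absurd h (by simp)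

lemma RAS_append (l : List ℕ) (x : ℕ) :
    IsRestrictedAscentSeq (l ++ [x]) ↔ IsRestrictedAscentSeq l ∧
      ((l = [] ∧ x = 0) ∨ (l ≠ [] ∧ maxL l - 1 ≤ x ∧ x ≤ ascents l + 1)) := by
  constructor
  · intro h
    constructor
    · intro i hi
      have hi' : i < (l ++ [x]).length := by simp; omega
      have h1 := h i hi'
      rw [List.take_append_of_le_length (Nat.le_of_lt hi)] at h1
      have hg : (l ++ [x]).get ⟨i, hi'⟩ = l.get ⟨i, hi⟩ := by
        simp [List.get_eq_getElem, List.getElem_append_left hi]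
      rw [hg] at h1
      exact h1
    · by_cases hl : l = []
      · left
        refine ⟨hl, ?_⟩
        subst hl
        have h0 := h 0 (by simp)
        simpa using h0
      · right
        have hlen : l.length ≠ 0 := by
          simpa [List.length_eq_zero_iff] using hl
        have hi' : l.length < (l ++ [x]).length := by simp
        have h1 := h l.length hi'
        rw [if_neg hlen] at h1
        rw [List.take_left] at h1
        have hg : (l ++ [x]).get ⟨l.length, hi'⟩ = x := by
          simp [List.get_eq_getElem]
        rw [hg] at h1
        exact ⟨hl, h1⟩
  · rintro ⟨hRAS, hcond⟩ i hi
    have hi2 : i < l.length + 1 := by simpa using hi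
    by_cases hil : i < l.length
    · have h1 := hRAS i hil
      have hg : (l ++ [x]).get ⟨i, hi⟩ = l.get ⟨i, hil⟩ := by
        simp [List.get_eq_getElem, List.getElem_append_left hil]
      rw [List.take_append_of_le_length (Nat.le_of_lt hil), hg]
      exact h1
    · have hi0 : i = l.length := by omega
      subst hi0
      rcases hcond with ⟨hl, hx⟩ | ⟨hl, h1, h2⟩
      · subst hl
        simpa using hx
      · have hlen : l.length ≠ 0 := by simpa [List.length_eq_zero_iff] using hl
        rw [if_neg hlen, List.take_left]
        have hg : (l ++ [x]).get ⟨l.length, hi⟩ = x := by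
          simp [List.get_eq_getElem]
        rw [hg]
        exact ⟨h1, h2⟩

lemma RAS_take {l : List ℕ} (n : ℕ) (h : IsRestrictedAscentSeq l) :
    IsRestrictedAscentSeq (l.take n) := by
  intro i hi
  have hin : i < n := by
    have := (List.length_take (i := n) (l := l)) ▸ hi
    omega
  have hi' : i < l.length := by
    have := (List.length_take (i := n) (l := l)) ▸ hi
    omega
  have h1 := h i hi'
  have ht : (l.take n).take i = l.take i := by
    rw [List.take_take, Nat.min_eq_left (Nat.le_of_lt hin)]
  have hg : (l.take n).get ⟨i, hi⟩ = l.get ⟨i, hi'⟩ := by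
    simp [List.get_eq_getElem, List.getElem_take]
  rw [ht, hg]
  exact h1

lemma RAS_prefix {l r : List ℕ} (h : IsRestrictedAscentSeq r) (hp : l <+: r) :
    IsRestrictedAscentSeq l := by
  rw [List.prefix_iff_eq_take.1 hp]
  exact RAS_take _ h

lemma RAS_maxL : ∀ {l : List ℕ}, IsRestrictedAscentSeq l → maxL l ≤ ascents l + 1 := by
  intro l
  induction l using List.reverseRecOn with
  | nil => intro _; simp [maxL, ascents_nil]
  | append_singleton l x ih =>
    intro h
    rcases (RAS_append l x).1 h with ⟨hR, ⟨hl, hx⟩ | ⟨hl, h1, h2⟩⟩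
    · subst hl; subst hx
      simp [maxL, ascents_single]
    · rw [maxL_append, ascents_append l hl x]
      have h3 := ih hR
      have h4 := lastL_le_maxL hl
      by_cases h5 : lastL l < x <;> simp [h5] <;> omega

lemma mem_exts {l : List ℕ} {x : ℕ} (h : maxL l ≤ ascents l + 1) :
    x ∈ exts l ↔ ((l = [] ∧ x = 0) ∨ (l ≠ [] ∧ maxL l - 1 ≤ x ∧ x ≤ ascents l + 1)) := by
  unfold exts
  by_cases hl : l = []
  · simp [hl]
  · rw [if_neg hl]
    rw [List.mem_range'_1]
    constructor
    · rintro ⟨ha, hb⟩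
      exact Or.inr ⟨hl, ha, by omega⟩
    · rintro (⟨h1, _⟩ | ⟨_, h1, h2⟩)
      · exact absurd h1 hl
      · exact ⟨h1, by omega⟩

lemma seqsFrom_zero (l : List ℕ) : seqsFrom 0 l = [l] := rfl

lemma seqsFrom_succ (k : ℕ) (l : List ℕ) :
    seqsFrom (k+1) l = (exts l).flatMap fun x => seqsFrom k (l ++ [x]) := rfl

lemma sum_range'_T (k : ℕ) : ∀ (d s : ℕ),
    ((List.range' s d).map (fun x => T 3 k (s + d - x))).sum = S k d := by
  intro d
  induction d with
  | zero => intro s; simp [S_zero]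
  | succ d ihd =>
    intro s
    rw [List.range'_succ, List.map_cons, List.sum_cons]
    have e1 : s + (d+1) - s = d + 1 := by omega
    have e2 : ∀ x, s + (d + 1) - x = (s + 1) + d - x := by intro x; omega
    have e3 : (List.range' (s+1) d).map (fun x => T 3 k (s + (d+1) - x)) =
        (List.range' (s+1) d).map (fun x => T 3 k ((s+1) + d - x)) := by
      exact List.map_congr_left (fun x _ => by rw [e2 x])
    rw [e1, e3, ihd (s+1), S_succ]
    omega

lemma cnt_eq : ∀ (k : ℕ) (l : List ℕ), l ≠ [] →
    ((maxL l = 0 ∧ ascents l = 0 ∧ lastL l = 0) → (seqsFrom k l).length = T 2 k 1) ∧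
    ((1 ≤ maxL l ∧ maxL l ≤ ascents l ∧ lastL l = maxL l) →
      (seqsFrom k l).length = T 3 k (ascents l + 1 - maxL l)) ∧
    ((1 ≤ maxL l ∧ maxL l ≤ ascents l + 1 ∧ lastL l + 1 = maxL l) →
      (seqsFrom k l).length = T 2 k (ascents l + 2 - maxL l)) := by
  intro k
  induction k with
  | zero =>
    intro l _
    refine ⟨fun _ => ?_, fun h => ?_, fun h => ?_⟩ <;>
      simp [seqsFrom_zero, T_zero_k]
  | succ k ih =>
    intro l hl
    refine ⟨fun hZ => ?_, fun hU => ?_, fun hV => ?_⟩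
    · -- Z branch
      obtain ⟨hm, ha, hlast⟩ := hZ
      have he : exts l = [0, 1] := by
        rw [exts, if_neg hl, hm, ha]
        rfl
      have f0 : (seqsFrom k (l ++ [0])).length = T 2 k 1 := by
        have h5 := (ih (l ++ [0]) (by simp)).1
        rw [maxL_append, ascents_append l hl, lastL_append, hm, ha, hlast] at h5
        simpa using h5
      have f1 : (seqsFrom k (l ++ [1])).length = T 3 k 1 := by
        have h5 := (ih (l ++ [1]) (by simp)).2.1
        rw [maxL_append, ascents_append l hl, lastL_append, hm, ha, hlast] at h5
        simpa using h5
      rw [seqsFrom_succ, List.length_flatMap, he]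
      simp only [List.map_cons, List.map_nil, List.sum_cons, List.sum_nil,
        Function.comp_apply]
      rw [f0, f1]
      have hr := R2 k 0
      rw [S_zero] at hr
      simp only [Nat.zero_add] at hr
      omega
    · -- U branch
      obtain ⟨h1, h2, h3⟩ := hU
      obtain ⟨m', hm'⟩ : ∃ m', maxL l = m' + 1 := ⟨maxL l - 1, by omega⟩
      obtain ⟨d', hd'⟩ : ∃ d', ascents l - m' = d' + 1 := ⟨ascents l - m' - 1, by omega⟩
      set a := ascents l with haa
      set d : ℕ := d' + 1 with hdd
      have he : exts l = m' :: (m'+1) :: List.range' (m'+2) d := by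
        rw [exts, if_neg hl, hm', Nat.succ_sub_one,
          show a + 2 - m' = d + 2 by omega, List.range'_succ, List.range'_succ]
      have f0 : (seqsFrom k (l ++ [m'])).length = T 2 k (d+1) := by
        have h5 := (ih (l ++ [m']) (by simp)).2.2
        rw [maxL_append, ascents_append l hl, lastL_append, hm', h3, hm'] at h5
        rw [show max (m'+1) m' = m'+1 by omega, if_neg (by omega : ¬ m'+1 < m')] at h5
        rw [show a + 0 + 2 - (m'+1) = d + 1 by omega] at h5
        exact h5 ⟨by omega, by omega, rfl⟩
      have f1 : (seqsFrom k (l ++ [m'+1])).length = T 3 k d := by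
        have h5 := (ih (l ++ [m'+1]) (by simp)).2.1
        rw [maxL_append, ascents_append l hl, lastL_append, hm', h3, hm'] at h5
        rw [show max (m'+1) (m'+1) = m'+1 by omega,
          if_neg (by omega : ¬ m'+1 < m'+1)] at h5
        rw [show a + 0 + 1 - (m'+1) = d by omega] at h5
        exact h5 ⟨by omega, by omega, rfl⟩
      have hmap : ∀ x ∈ List.range' (m'+2) d,
          (seqsFrom k (l ++ [x])).length = T 3 k ((m'+2) + d - x) := by
        intro x hx
        rw [List.mem_range'_1] at hx
        have h5 := (ih (l ++ [x]) (by simp)).2.1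
        rw [maxL_append, ascents_append l hl, lastL_append, hm', h3, hm'] at h5
        rw [show max (m'+1) x = x by omega, if_pos (by omega : m'+1 < x)] at h5
        rw [show a + 1 + 1 - x = (m'+2) + d - x by omega] at h5
        exact h5 ⟨by omega, by omega, rfl⟩
      rw [seqsFrom_succ, List.length_flatMap, he]
      simp only [List.map_cons, List.sum_cons, Function.comp_apply]
      rw [f0, f1]
      have hsum : (List.map (List.length ∘ fun x => seqsFrom k (l ++ [x]))
          (List.range' (m'+2) d)).sum = S k d := by
        rw [List.map_congr_left (fun x hx => by
          simpa using hmap x hx)]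
        exact sum_range'_T k d (m'+2)
      simp only [Function.comp_def] at hsum
      rw [hsum]
      have hr := R1 k d'
      rw [show d' + 1 = d from rfl] at hr
      rw [show d' + 2 = d + 1 by omega] at hr
      rw [show a + 1 - maxL l = d by omega]
      omega
    · -- V branch
      obtain ⟨h1, h2, h3⟩ := hV
      obtain ⟨m', hm'⟩ : ∃ m', maxL l = m' + 1 := ⟨maxL l - 1, by omega⟩
      set a := ascents l with haa
      set d : ℕ := a - m' with hdd
      have hlast : lastL l = m' := by omega
      have he : exts l = m' :: (m'+1) :: List.range' (m'+2) d := by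
        rw [exts, if_neg hl, hm', Nat.succ_sub_one,
          show a + 2 - m' = d + 2 by omega, List.range'_succ, List.range'_succ]
      have f0 : (seqsFrom k (l ++ [m'])).length = T 2 k (d+1) := by
        have h5 := (ih (l ++ [m']) (by simp)).2.2
        rw [maxL_append, ascents_append l hl, lastL_append, hm', hlast] at h5
        rw [show max (m'+1) m' = m'+1 by omega, if_neg (by omega : ¬ m' < m')] at h5
        rw [show a + 0 + 2 - (m'+1) = d + 1 by omega] at h5
        exact h5 ⟨by omega, by omega, rfl⟩
      have f1 : (seqsFrom k (l ++ [m'+1])).length = T 3 k (d+1) := by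
        have h5 := (ih (l ++ [m'+1]) (by simp)).2.1
        rw [maxL_append, ascents_append l hl, lastL_append, hm', hlast] at h5
        rw [show max (m'+1) (m'+1) = m'+1 by omega,
          if_pos (by omega : m' < m'+1)] at h5
        rw [show a + 1 + 1 - (m'+1) = d + 1 by omega] at h5
        exact h5 ⟨by omega, by omega, rfl⟩
      have hmap : ∀ x ∈ List.range' (m'+2) d,
          (seqsFrom k (l ++ [x])).length = T 3 k ((m'+2) + d - x) := by
        intro x hx
        rw [List.mem_range'_1] at hx
        have h5 := (ih (l ++ [x]) (by simp)).2.1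
        rw [maxL_append, ascents_append l hl, lastL_append, hm', hlast] at h5
        rw [show max (m'+1) x = x by omega, if_pos (by omega : m' < x)] at h5
        rw [show a + 1 + 1 - x = (m'+2) + d - x by omega] at h5
        exact h5 ⟨by omega, by omega, rfl⟩
      rw [seqsFrom_succ, List.length_flatMap, he]
      simp only [List.map_cons, List.sum_cons, Function.comp_apply]
      rw [f0, f1]
      have hsum : (List.map (List.length ∘ fun x => seqsFrom k (l ++ [x]))
          (List.range' (m'+2) d)).sum = S k d := by
        rw [List.map_congr_left (fun x hx => by
          simpa using hmap x hx)]
        exact sum_range'_T k d (m'+2)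
      simp only [Function.comp_def] at hsum
      rw [hsum]
      have hr := R2 k d
      rw [show a + 2 - maxL l = d + 1 by omega]
      omega

lemma mem_seqsFrom : ∀ (k : ℕ) (l r : List ℕ), IsRestrictedAscentSeq l →
    (r ∈ seqsFrom k l ↔
      (IsRestrictedAscentSeq r ∧ r.length = l.length + k ∧ l <+: r)) := by
  intro k
  induction k with
  | zero =>
    intro l r hl
    rw [seqsFrom_zero]
    simp only [List.mem_singleton]
    constructor
    · rintro rfl
      exact ⟨hl, by omega, List.prefix_refl _⟩
    · rintro ⟨_, hlen, hp⟩
      exact (hp.eq_of_length (by omega)).symm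
  | succ k ihk =>
    intro l r hl
    rw [seqsFrom_succ, List.mem_flatMap]
    constructor
    · rintro ⟨x, hx, hr⟩
      have hx' := (mem_exts (RAS_maxL hl)).1 hx
      have hRlx : IsRestrictedAscentSeq (l ++ [x]) := (RAS_append l x).2 ⟨hl, hx'⟩
      obtain ⟨hRr, hlen, hp⟩ := (ihk (l ++ [x]) r hRlx).1 hr
      rw [List.length_append, List.length_singleton] at hlen
      refine ⟨hRr, by omega, ?_⟩
      calc l <+: l ++ [x] := List.prefix_append l [x]
        _ <+: r := hp
    · rintro ⟨hRr, hlen, hp⟩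
      obtain ⟨t, rfl⟩ := hp
      cases t with
      | nil => rw [List.append_nil] at hlen; omega
      | cons y t' =>
        refine ⟨y, ?_, ?_⟩
        · have hply : l ++ [y] <+: l ++ y :: t' := ⟨t', by simp⟩
          have hRly : IsRestrictedAscentSeq (l ++ [y]) := RAS_prefix hRr hply
          have := ((RAS_append l y).1 hRly).2
          exact (mem_exts (RAS_maxL hl)).2 this
        · refine (ihk (l ++ [y]) _ ?_).2 ⟨hRr, ?_, ⟨t', by simp⟩⟩
          · exact RAS_prefix hRr ⟨t', by simp⟩
          · simp at hlen ⊢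
            omega

lemma nodup_seqsFrom : ∀ (k : ℕ) (l : List ℕ), IsRestrictedAscentSeq l →
    (seqsFrom k l).Nodup := by
  intro k
  induction k with
  | zero => intro l _; simp [seqsFrom_zero]
  | succ k ihk =>
    intro l hl
    rw [seqsFrom_succ, List.nodup_flatMap]
    constructor
    · intro x hx
      have hx' := (mem_exts (RAS_maxL hl)).1 hx
      exact ihk _ ((RAS_append l x).2 ⟨hl, hx'⟩)
    · have hnd : (exts l).Nodup := by
        rw [exts]
        split
        · simp
        · exact List.nodup_range'
      refine List.Pairwise.imp_of_mem ?_ hnd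
      intro x y hx hy hxy
      intro r hrx hry
      have hx' := (mem_exts (RAS_maxL hl)).1 hx
      have hy' := (mem_exts (RAS_maxL hl)).1 hy
      have hpx := ((mem_seqsFrom k (l ++ [x]) r ((RAS_append l x).2 ⟨hl, hx'⟩)).1 hrx).2.2
      have hpy := ((mem_seqsFrom k (l ++ [y]) r ((RAS_append l y).2 ⟨hl, hy'⟩)).1 hry).2.2
      have : l ++ [x] = l ++ [y] := by
        rcases List.prefix_or_prefix_of_prefix hpx hpy with h | h
        · exact h.eq_of_length (by simp)
        · exact (h.eq_of_length (by simp)).symm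
      simp at this
      exact hxy this

lemma RAS_zero_list : IsRestrictedAscentSeq [0] := by
  intro i hi
  simp at hi
  subst hi
  simp

lemma seqsFrom_total (n : ℕ) : (seqsFrom n []).length = catalan n := by
  cases n with
  | zero => simp [seqsFrom_zero, catalan_zero]
  | succ n =>
    have he : exts [] = [0] := by rw [exts, if_pos rfl]
    rw [seqsFrom_succ, he]
    have : ([0].flatMap fun x => seqsFrom n ([] ++ [x])) = seqsFrom n [0] := by
      simp
    rw [this]
    have hZ : maxL [0] = 0 ∧ ascents [0] = 0 ∧ lastL [0] = 0 := by
      refine ⟨?_, ?_, ?_⟩ <;> rfl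
    have := (cnt_eq n [0] (by simp)).1 hZ
    rw [this, T_one_d, W_two_eq_catalan]

theorem restricted_ascent_seq_card_eq_catalan (n : ℕ) :
    Nat.card {l : List ℕ // IsRestrictedAscentSeq l ∧ l.length = n} =
      Nat.choose (2 * n) n / (n + 1) := by
  have hmem : ∀ l : List ℕ,
      (IsRestrictedAscentSeq l ∧ l.length = n) ↔ l ∈ (seqsFrom n []).toFinset := by
    intro l
    rw [List.mem_toFinset, mem_seqsFrom n [] l RAS_nil]
    constructor
    · rintro ⟨h1, h2⟩
      exact ⟨h1, by simpa using h2, List.nil_prefix⟩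
    · rintro ⟨h1, h2, -⟩
      exact ⟨h1, by simpa using h2⟩
  have h1 : Nat.card {l : List ℕ // IsRestrictedAscentSeq l ∧ l.length = n}
      = Nat.card {l // l ∈ (seqsFrom n []).toFinset} :=
    Nat.card_congr (Equiv.subtypeEquivRight hmem)
  rw [h1, Nat.card_eq_finsetCard,
    List.toFinset_card_of_nodup (nodup_seqsFrom n [] RAS_nil), seqsFrom_total,
    catalan_eq_centralBinom_div]
  rfl
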